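/- If w : ℝ → ℝ is twice differentiable and satisfies w'' + β w' + α w = 0, where β² - 4α < 0, then I(ζ) = log(α w² + β w w' + (w')²) - (2β / sqrt(4α - β²)) · arctan( (2w' + β w) / (sqrt(4α - β²) · w) ) is constant on any interval where w > 0 and α w² + β w w' + (w')² > 0. -/

import Mathlib

theorem stmt_2 (α β : ℝ) (hdisc : β ^ 2 - 4 * α < 0)
    (w : ℝ → ℝ) (hw : Differentiable ℝ w) (hw' : Differentiable ℝ (deriv w))
    (heq : ∀ ζ : ℝ, deriv (deriv w) ζ + β * deriv w ζ + α * w ζ = 0)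
    (a b : ℝ)
    (hwpos : ∀ ζ ∈ Set.Ioo a b, 0 < w ζ)
    (hqpos : ∀ ζ ∈ Set.Ioo a b,
      0 < α * w ζ ^ 2 + β * w ζ * deriv w ζ + deriv w ζ ^ 2) :
    ∀ x ∈ Set.Ioo a b, ∀ x' ∈ Set.Ioo a b,
      Real.log (α * w x ^ 2 + β * w x * deriv w x + deriv w x ^ 2)
        - (2 * β / Real.sqrt (4 * α - β ^ 2)) *
            Real.arctan ((2 * deriv w x + β * w x) / (Real.sqrt (4 * α - β ^ 2) * w x))
      = Real.log (α * w x' ^ 2 + β * w x' * deriv w x' + deriv w x' ^ 2)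
        - (2 * β / Real.sqrt (4 * α - β ^ 2)) *
            Real.arctan ((2 * deriv w x' + β * w x') / (Real.sqrt (4 * α - β ^ 2) * w x')) := by
  set s : ℝ := Real.sqrt (4 * α - β ^ 2) with hs_def
  have hs2 : s ^ 2 = 4 * α - β ^ 2 := Real.sq_sqrt (by linarith)
  have hspos : 0 < s := Real.sqrt_pos.mpr (by linarith)
  set f : ℝ → ℝ := fun ζ =>
    Real.log (α * w ζ ^ 2 + β * w ζ * deriv w ζ + deriv w ζ ^ 2)
      - (2 * β / s) * Real.arctan ((2 * deriv w ζ + β * w ζ) / (s * w ζ)) with hf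
  have key : ∀ ζ ∈ Set.Ioo a b, HasDerivAt f 0 ζ := by
    intro ζ hζ
    have hW := hwpos ζ hζ
    have hQ := hqpos ζ hζ
    set W := w ζ
    set V := deriv w ζ
    have hA : deriv (deriv w) ζ = -(β * V + α * W) := by have := heq ζ; linarith
    have hwζ : HasDerivAt w V ζ := (hw ζ).hasDerivAt
    have hvζ : HasDerivAt (deriv w) (-(β * V + α * W)) ζ := hA ▸ (hw' ζ).hasDerivAt
    -- derivative of Q
    have hQd : HasDerivAt (fun t => α * w t ^ 2 + β * w t * deriv w t + deriv w t ^ 2)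
        (α * (2 * W * V) + β * (V * (deriv w ζ) + W * (-(β * V + α * W)))
          + 2 * (deriv w ζ) * (-(β * V + α * W))) ζ := by
      have h1 : HasDerivAt (fun t => α * w t ^ 2) (α * (2 * W * V)) ζ := by
        have := (hwζ.pow 2).const_mul α
        simpa [mul_comm, mul_assoc, mul_left_comm] using this
      have h2 : HasDerivAt (fun t => β * w t * deriv w t)
          (β * (V * (deriv w ζ) + W * (-(β * V + α * W)))) ζ := by
        have := ((hwζ.const_mul β).mul hvζ)
        refine this.congr_deriv ?_
        ring
      have h3 : HasDerivAt (fun t => deriv w t ^ 2) (2 * (deriv w ζ) * (-(β * V + α * W))) ζ := by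
        have := hvζ.pow 2
        refine this.congr_deriv ?_
        norm_num
      exact (h1.add h2).add h3
    have hlog : HasDerivAt (fun t => Real.log (α * w t ^ 2 + β * w t * deriv w t + deriv w t ^ 2))
        ((α * (2 * W * V) + β * (V * V + W * (-(β * V + α * W)))
          + 2 * V * (-(β * V + α * W))) / (α * W ^ 2 + β * W * V + V ^ 2)) ζ :=
      hQd.log (ne_of_gt hQ)
    -- derivative of arctan part
    have hden : s * W ≠ 0 := by positivity
    have hnum : HasDerivAt (fun t => 2 * deriv w t + β * w t)
        (2 * (-(β * V + α * W)) + β * V) ζ := (hvζ.const_mul 2).add (hwζ.const_mul β)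
    have hdenom : HasDerivAt (fun t => s * w t) (s * V) ζ := hwζ.const_mul s
    have hu : HasDerivAt (fun t => (2 * deriv w t + β * w t) / (s * w t))
        (((2 * (-(β * V + α * W)) + β * V) * (s * W) - (2 * V + β * W) * (s * V)) / (s * W) ^ 2)
        ζ := hnum.div hdenom hden
    have harc := hu.arctan
    have hfull := hlog.sub ((harc.const_mul (2 * β / s)))
    refine hfull.congr_deriv (Eq.symm ?_)
    have hWne : W ≠ 0 := ne_of_gt hW
    have hsne : s ≠ 0 := ne_of_gt hspos
    have hQne : α * W ^ 2 + β * W * V + V ^ 2 ≠ 0 := ne_of_gt hQ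
    have h1u : 1 + ((2 * V + β * W) / (s * W)) ^ 2 ≠ 0 := by positivity
    rw [show deriv w ζ = V from rfl, show w ζ = W from rfl]
    have hk : 1 + ((2 * V + β * W) / (s * W)) ^ 2 = 4 * (α * W ^ 2 + β * W * V + V ^ 2) / (s * W) ^ 2 := by
      rw [div_pow, eq_div_iff (by positivity), add_mul, div_mul_cancel₀ _ (by positivity)]
      linear_combination W ^ 2 * hs2
    rw [hk]
    field_simp
    ring
  -- constancy on the open interval
  intro x hx x' hx'
  have hdiff : DifferentiableOn ℝ f (Set.Ioo a b) := fun ζ hζ =>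
    ((key ζ hζ).differentiableAt).differentiableWithinAt
  have hderiv0 : ∀ ζ ∈ Set.Ioo a b, fderivWithin ℝ f (Set.Ioo a b) ζ = 0 := by
    intro ζ hζ
    rw [fderivWithin_of_isOpen isOpen_Ioo hζ, (key ζ hζ).hasFDerivAt.fderiv]
    ext
    simp
  exact (convex_Ioo a b).is_const_of_fderivWithin_eq_zero hdiff hderiv0 hx hx'
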